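/- Let Q be a facet of P_a not contained in any coordinate hyperplane, with unique linear function L_Q equal to 1 on Q. Then e = (1,...,1) lies in (M_Q \ M_Q') ∩ V_Q; in particular -L_Q(e) ∈ R_Q. -/

import Mathlib

open Set

namespace BS

def toR {n : ℕ} (u : Fin n → ℤ) : Fin n → ℝ := fun i => (u i : ℝ)

def natR {n : ℕ} (u : Fin n → ℕ) : Fin n → ℝ := fun i => (u i : ℝ)

def natZ {n : ℕ} (u : Fin n → ℕ) : Fin n → ℤ := fun i => (u i : ℤ)

/-- `Γ` is the exponent set of a nonzero monomial ideal. -/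
def IsMonIdeal {n : ℕ} (Γ : Set (Fin n → ℕ)) : Prop :=
  Γ.Nonempty ∧ ∀ u ∈ Γ, ∀ w : Fin n → ℕ, u + w ∈ Γ

/-- The Newton polyhedron: convex hull of the exponent set. -/
def newton {n : ℕ} (Γ : Set (Fin n → ℕ)) : Set (Fin n → ℝ) :=
  convexHull ℝ (natR '' Γ)

/-- The subsemigroup (containing 0) of ℤⁿ generated by differences u - v,
u ∈ Γ, v ∈ Γ ∩ Q. -/
def diffMonoid {n : ℕ} (Γ : Set (Fin n → ℕ)) (Q : Set (Fin n → ℝ)) :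
    AddSubmonoid (Fin n → ℤ) :=
  AddSubmonoid.closure {d | ∃ u ∈ Γ, ∃ v ∈ Γ, natR v ∈ Q ∧ d = natZ u - natZ v}

/-- M_Q : the translate by e = (1,...,1) of the difference semigroup. -/
def MQ {n : ℕ} (Γ : Set (Fin n → ℕ)) (Q : Set (Fin n → ℝ)) : Set (Fin n → ℤ) :=
  {m | m - 1 ∈ diffMonoid Γ Q}

/-- M_Q^{(k)} = k·v₀ + M_Q. -/
def MQk {n : ℕ} (Γ : Set (Fin n → ℕ)) (Q : Set (Fin n → ℝ)) (v0 : Fin n → ℕ) (k : ℕ) :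
    Set (Fin n → ℤ) :=
  {m | m - (k : ℤ) • natZ v0 ∈ MQ Γ Q}

/-- V_Q : linear span of the face Q. -/
def VQ {n : ℕ} (Q : Set (Fin n → ℝ)) : Submodule ℝ (Fin n → ℝ) := Submodule.span ℝ Q

/-- R_Q = { -L_Q(u) : u ∈ (M_Q \ M_Q') ∩ V_Q }. -/
def RQ {n : ℕ} (Γ : Set (Fin n → ℕ)) (Q : Set (Fin n → ℝ)) (v0 : Fin n → ℕ)
    (L : (Fin n → ℝ) →ₗ[ℝ] ℝ) : Set ℝ :=
  {x | ∃ u ∈ MQ Γ Q \ MQk Γ Q v0 1, toR u ∈ VQ Q ∧ x = - L (toR u)}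

/-- Q is contained in some coordinate hyperplane. -/
def InCoordHyp {n : ℕ} (Q : Set (Fin n → ℝ)) : Prop := ∃ i, ∀ q ∈ Q, q i = 0

/-- The subgroup G_Q of ℤⁿ generated by differences of elements of Γ ∩ Q. -/
def diffGroup {n : ℕ} (Γ : Set (Fin n → ℕ)) (Q : Set (Fin n → ℝ)) :
    AddSubgroup (Fin n → ℤ) :=
  AddSubgroup.closure
    {d | ∃ u ∈ Γ, natR u ∈ Q ∧ ∃ v ∈ Γ, natR v ∈ Q ∧ d = natZ u - natZ v}

end BS

/-- For a facet Q not contained in any coordinate hyperplane, e = (1,...,1) lies in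
(M_Q \\ M_Q') ∩ V_Q; in particular -L_Q(e) ∈ R_Q. -/
theorem e_mem_MQ_diff {n : ℕ} (Γ : Set (Fin n → ℕ)) (hΓ : BS.IsMonIdeal Γ)
    (hproper : (0 : Fin n → ℕ) ∉ Γ)
    (Q : Set (Fin n → ℝ)) (hface : IsExposed ℝ (BS.newton Γ) Q)
    (hnc : ¬ BS.InCoordHyp Q)
    (L : (Fin n → ℝ) →ₗ[ℝ] ℝ) (hL1 : ∀ q ∈ Q, L q = 1)
    (hLge : ∀ x ∈ BS.newton Γ, 1 ≤ L x)
    (hQeq : Q = BS.newton Γ ∩ {x | L x = 1})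
    (hspan : BS.VQ Q = ⊤)
    (v0 : Fin n → ℕ) (hv0 : v0 ∈ Γ) (hv0Q : BS.natR v0 ∈ Q) :
    (1 : Fin n → ℤ) ∈ BS.MQ Γ Q \ BS.MQk Γ Q v0 1 ∧
    BS.toR (1 : Fin n → ℤ) ∈ BS.VQ Q ∧
    - L (BS.toR (1 : Fin n → ℤ)) ∈ BS.RQ Γ Q v0 L := by
  have key : ∀ m ∈ BS.diffMonoid Γ Q, 0 ≤ L (BS.toR m) := by
    intro m hm
    induction hm using AddSubmonoid.closure_induction with
    | mem d hd =>
      obtain ⟨u, hu, v, hv, hvQ, rfl⟩ := hd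
      have h1 : BS.toR (BS.natZ u - BS.natZ v) = BS.natR u - BS.natR v := by
        funext i; simp [BS.toR, BS.natZ, BS.natR]
      rw [h1, map_sub]
      have hu' : BS.natR u ∈ BS.newton Γ := subset_convexHull ℝ _ ⟨u, hu, rfl⟩
      have h2 := hLge _ hu'
      have h3 := hL1 _ hvQ
      linarith
    | zero =>
      have h0 : BS.toR (0 : Fin n → ℤ) = 0 := by funext i; simp [BS.toR]
      rw [h0, map_zero]
    | add a b _ _ ha hb =>
      have hadd : BS.toR (a + b) = BS.toR a + BS.toR b := by
        funext i; simp [BS.toR]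
      rw [hadd, map_add]
      linarith
  have hmem1 : (1 : Fin n → ℤ) ∈ BS.MQ Γ Q := by
    have h0 : (1 : Fin n → ℤ) - 1 ∈ BS.diffMonoid Γ Q := by
      rw [sub_self]; exact (BS.diffMonoid Γ Q).zero_mem
    exact h0
  have hnot : (1 : Fin n → ℤ) ∉ BS.MQk Γ Q v0 1 := by
    intro h
    have h2 : (1 : Fin n → ℤ) - (1 : ℤ) • BS.natZ v0 - 1 ∈ BS.diffMonoid Γ Q := h
    have h3 := key _ h2
    have he : BS.toR ((1 : Fin n → ℤ) - (1 : ℤ) • BS.natZ v0 - 1) = - BS.natR v0 := by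
      funext i; simp [BS.toR, BS.natZ, BS.natR]
    rw [he, map_neg, hL1 _ hv0Q] at h3
    linarith
  have hV : BS.toR (1 : Fin n → ℤ) ∈ BS.VQ Q := by rw [hspan]; trivial
  exact ⟨⟨hmem1, hnot⟩, hV, ⟨1, ⟨hmem1, hnot⟩, hV, rfl⟩⟩
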